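/- Let D be a binary dataset, let o be a linear order on the K attributes, and let 𝒞 = {C_1,…,C_L} ∈ Seg(o) be a collection of item segments such that q_D(S_i = v) > 0 for every i = 1,…,L−1 and every binary vector v of length |S_i|. Define p* on {0,1}^K by p*(A = t) = (∏_{i=1}^{L} q_D(C_i = t_{C_i})) / (∏_{i=1}^{L−1} q_D(S_i = t_{S_i})). Then p* is a probability distribution, p* belongs to M(𝒞), p*(C_i = v) = q_D(C_i = v) for every i and every v, and p* is the unique member of M(𝒞) whose marginals on every C_i agree with those of q_D. -/

import Mathlib

open Finset

/-- The marginal probability `p(X = v)`: the probability that the coordinates in `X`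
agree with `v`. -/
noncomputable def marg {K : ℕ} (p : (Fin K → Bool) → ℝ) (X : Finset (Fin K))
    (v : Fin K → Bool) : ℝ :=
  ∑ t ∈ Finset.univ.filter (fun t : Fin K → Bool => ∀ i ∈ X, t i = v i), p t

/-- `p` is a probability distribution on `{0,1}^K`. -/
def IsDist {K : ℕ} (p : (Fin K → Bool) → ℝ) : Prop :=
  (∀ t, 0 ≤ p t) ∧ ∑ t : Fin K → Bool, p t = 1

/-- The empirical distribution of a dataset `D`. -/
noncomputable def empDist {K : ℕ} (D : Multiset (Fin K → Bool)) : (Fin K → Bool) → ℝ :=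
  fun v => (D.count v : ℝ) / (Multiset.card D : ℝ)

/-- The entropy (base 2) of the marginal of `p` on the attribute set `X`,
summing over representative vectors which are `false` outside of `X`. -/
noncomputable def segEntropy {K : ℕ} (p : (Fin K → Bool) → ℝ) (X : Finset (Fin K)) : ℝ :=
  -∑ v ∈ Finset.univ.filter (fun v : Fin K → Bool => ∀ i, i ∉ X → v i = false),
      marg p X v * Real.logb 2 (marg p X v)

/-- The item segment of the attributes at positions `a,…,b` in the order `o`. -/
def segIv {K : ℕ} (o : Equiv.Perm (Fin K)) (a b : ℕ) : Finset (Fin K) :=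
  (Finset.univ.filter (fun k : Fin K => a ≤ (k : ℕ) ∧ (k : ℕ) ≤ b)).image o

/-- A collection `𝒞 = {C_1, …, C_L} ∈ Seg(o)` of item segments covering all attributes,
forming an antichain, listed in the order of their first attribute.  The `i`-th segment
(for `0 ≤ i < L`) consists of the positions `s i, …, e i` in the order `o`. -/
structure SegColl (K : ℕ) where
  /-- number of segments -/
  L : ℕ
  hL : 0 < L
  /-- start position of each segment -/
  s : ℕ → ℕ
  /-- end position of each segment -/
  e : ℕ → ℕ
  s_mono : ∀ i, i + 1 < L → s i < s (i + 1)
  e_mono : ∀ i, i + 1 < L → e i < e (i + 1)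
  s_le_e : ∀ i, i < L → s i ≤ e i
  s_first : s 0 = 0
  e_last : e (L - 1) = K - 1
  e_lt : ∀ i, i < L → e i < K
  covers : ∀ i, i + 1 < L → s (i + 1) ≤ e i + 1

/-- The `i`-th item segment `C_{i+1}` of the collection, under the order `o`. -/
def SegColl.seg {K : ℕ} (𝒞 : SegColl K) (o : Equiv.Perm (Fin K)) (i : ℕ) : Finset (Fin K) :=
  segIv o (𝒞.s i) (𝒞.e i)

/-- The intersection `S_i = C_i ∩ C_{i+1}` of consecutive segments. -/
def SegColl.ovl {K : ℕ} (𝒞 : SegColl K) (o : Equiv.Perm (Fin K)) (i : ℕ) : Finset (Fin K) :=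
  𝒞.seg o i ∩ 𝒞.seg o (i + 1)

/-- Membership of a distribution `p` in the model `M(𝒞)`:
`p(A = t) ∏_{i=1}^{L-1} p(S_i = t) = ∏_{i=1}^{L} p(C_i = t)` for all `t`. -/
def memModel {K : ℕ} (o : Equiv.Perm (Fin K)) (𝒞 : SegColl K)
    (p : (Fin K → Bool) → ℝ) : Prop :=
  IsDist p ∧ ∀ t : Fin K → Bool,
    p t * ∏ i ∈ Finset.range (𝒞.L - 1), marg p (𝒞.ovl o i) t
      = ∏ i ∈ Finset.range 𝒞.L, marg p (𝒞.seg o i) t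

/-- The number of free parameters `df(𝒞)`. -/
def SegColl.df {K : ℕ} (𝒞 : SegColl K) (o : Equiv.Perm (Fin K)) : ℤ :=
  (∑ i ∈ Finset.range 𝒞.L, ((2 : ℤ) ^ (𝒞.seg o i).card - 1))
    - ∑ i ∈ Finset.range (𝒞.L - 1), ((2 : ℤ) ^ (𝒞.ovl o i).card - 1)

/-- The score of a single item segment `C`:
`score(C) = |D| H(C; D) + (log₂|D|/2)(2^{|C|} - 1)`. -/
noncomputable def segScore {K : ℕ} (D : Multiset (Fin K → Bool)) (C : Finset (Fin K)) : ℝ :=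
  (Multiset.card D : ℝ) * segEntropy (empDist D) C
    + Real.logb 2 (Multiset.card D) / 2 * ((2 : ℝ) ^ C.card - 1)

/-- The score of a collection: `score(𝒞) = ∑ score(C_i) - ∑ score(S_i)`. -/
noncomputable def collScore {K : ℕ} (D : Multiset (Fin K → Bool)) (o : Equiv.Perm (Fin K))
    (𝒞 : SegColl K) : ℝ :=
  ∑ i ∈ Finset.range 𝒞.L, segScore D (𝒞.seg o i)
    - ∑ i ∈ Finset.range (𝒞.L - 1), segScore D (𝒞.ovl o i)


section MyAux
variable {K : ℕ}

/-- vectors agreeing with `v` outside `B`. -/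
def offFix (B : Finset (Fin K)) (v : Fin K → Bool) : Finset (Fin K → Bool) :=
  Finset.univ.filter fun w => ∀ i ∉ B, w i = v i

lemma mem_offFix {B : Finset (Fin K)} {v w : Fin K → Bool} :
    w ∈ offFix B v ↔ ∀ i ∉ B, w i = v i := by simp [offFix]

lemma offFix_empty (v : Fin K → Bool) : offFix (∅ : Finset (Fin K)) v = {v} := by
  ext w
  simp [offFix, funext_iff]

lemma offFix_univ (v : Fin K → Bool) : offFix (univ : Finset (Fin K)) v = univ := by
  simp [offFix]

lemma marg_eq_sum_offFix (p : (Fin K → Bool) → ℝ) (X : Finset (Fin K)) (v : Fin K → Bool) :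
    marg p X v = ∑ w ∈ offFix Xᶜ v, p w := by
  unfold marg offFix
  congr 1
  ext t
  simp [Finset.mem_compl, not_not]

lemma marg_congr {p : (Fin K → Bool) → ℝ} {X : Finset (Fin K)} {u v : Fin K → Bool}
    (h : ∀ i ∈ X, u i = v i) : marg p X u = marg p X v := by
  unfold marg
  refine Finset.sum_congr ?_ fun _ _ => rfl
  ext t
  simp only [Finset.mem_filter, Finset.mem_univ, true_and]
  exact ⟨fun ht i hi => (ht i hi).trans (h i hi), fun ht i hi => (ht i hi).trans (h i hi).symm⟩

lemma marg_fn_congr {p p' : (Fin K → Bool) → ℝ} (h : ∀ t, p t = p' t) (X : Finset (Fin K))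
    (v : Fin K → Bool) : marg p X v = marg p' X v :=
  Finset.sum_congr rfl fun t _ => h t

lemma marg_nonneg {p : (Fin K → Bool) → ℝ} (hp : ∀ t, 0 ≤ p t) (X : Finset (Fin K))
    (v : Fin K → Bool) : 0 ≤ marg p X v :=
  Finset.sum_nonneg fun _ _ => hp _

lemma marg_empty (p : (Fin K → Bool) → ℝ) (v : Fin K → Bool) :
    marg p (∅ : Finset (Fin K)) v = ∑ t : Fin K → Bool, p t := by
  unfold marg
  simp

/-- the key fibration lemma: summing over `offFix (B1 ∪ B2)` in two stages. -/
lemma sum_offFix_union {B1 B2 : Finset (Fin K)} (hd : Disjoint B1 B2) (v : Fin K → Bool)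
    (F : (Fin K → Bool) → ℝ) :
    ∑ w ∈ offFix (B1 ∪ B2) v, F w = ∑ u ∈ offFix B1 v, ∑ w ∈ offFix B2 u, F w := by
  have hmaps : ∀ w ∈ offFix (B1 ∪ B2) v,
      (fun i => if i ∈ B1 then w i else v i) ∈ offFix B1 v := by
    intro w _
    rw [mem_offFix]
    intro i hi
    simp [hi]
  rw [← Finset.sum_fiberwise_of_maps_to hmaps F]
  refine Finset.sum_congr rfl fun u hu => ?_
  congr 1
  rw [mem_offFix] at hu
  ext w
  simp only [Finset.mem_filter, mem_offFix, Finset.mem_union, not_or]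
  constructor
  · rintro ⟨hw, hg⟩ i hi2
    by_cases hi1 : i ∈ B1
    · have := congrFun hg i
      simpa [hi1] using this
    · rw [hw i ⟨hi1, hi2⟩]
      exact (hu i hi1).symm
  · intro hw
    constructor
    · intro i hi
      rw [hw i hi.2]
      exact hu i hi.1
    · funext i
      by_cases hi1 : i ∈ B1
      · simp only [hi1, if_true]
        exact hw i (Finset.disjoint_left.mp hd hi1)
      · simp only [hi1, if_false]
        exact (hu i hi1).symm

lemma marg_split {p : (Fin K → Bool) → ℝ} {A B : Finset (Fin K)} (hd : Disjoint A B)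
    (v : Fin K → Bool) :
    marg p A v = ∑ u ∈ offFix B v, marg p (A ∪ B) u := by
  rw [marg_eq_sum_offFix]
  have hAc : Aᶜ = B ∪ (A ∪ B)ᶜ := by
    have hdl := Finset.disjoint_left.mp hd
    ext i
    simp only [Finset.mem_compl, Finset.mem_union, not_or]
    by_cases h1 : i ∈ A <;> by_cases h2 : i ∈ B <;>
      first
        | (exfalso; exact hdl h1 h2)
        | simp [h1, h2]
  have hd2 : Disjoint B (A ∪ B)ᶜ := by
    rw [Finset.disjoint_left]
    intro a ha hb
    rw [Finset.mem_compl, Finset.mem_union, not_or] at hb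
    exact hb.2 ha
  rw [hAc, sum_offFix_union hd2 v p]
  exact Finset.sum_congr rfl fun u _ => (marg_eq_sum_offFix p (A ∪ B) u).symm

end MyAux

section SegAux
variable {K : ℕ}

lemma mem_segIv {o : Equiv.Perm (Fin K)} {a b : ℕ} {i : Fin K} :
    i ∈ segIv o a b ↔ a ≤ ((o.symm i : Fin K) : ℕ) ∧ ((o.symm i : Fin K) : ℕ) ≤ b := by
  unfold segIv
  simp only [Finset.mem_image, Finset.mem_filter, Finset.mem_univ, true_and]
  constructor
  · rintro ⟨k, hk, rfl⟩
    simpa using hk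
  · intro h
    exact ⟨o.symm i, h, by simp⟩

lemma mem_seg {𝒞 : SegColl K} {o : Equiv.Perm (Fin K)} {m : ℕ} {i : Fin K} :
    i ∈ 𝒞.seg o m ↔ 𝒞.s m ≤ ((o.symm i : Fin K) : ℕ) ∧ ((o.symm i : Fin K) : ℕ) ≤ 𝒞.e m :=
  mem_segIv

lemma mem_ovl {𝒞 : SegColl K} {o : Equiv.Perm (Fin K)} {m : ℕ} {i : Fin K} :
    i ∈ 𝒞.ovl o m ↔ ((𝒞.s m ≤ ((o.symm i : Fin K) : ℕ) ∧ ((o.symm i : Fin K) : ℕ) ≤ 𝒞.e m) ∧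
      (𝒞.s (m+1) ≤ ((o.symm i : Fin K) : ℕ) ∧ ((o.symm i : Fin K) : ℕ) ≤ 𝒞.e (m+1))) := by
  unfold SegColl.ovl
  rw [Finset.mem_inter, mem_seg, mem_seg]

/-- coordinates at positions `≥ e (m-1) + 1` (everything for `m = 0`). -/
def tailSet (𝒞 : SegColl K) (o : Equiv.Perm (Fin K)) (m : ℕ) : Finset (Fin K) :=
  Finset.univ.filter fun i => (if m = 0 then 0 else 𝒞.e (m-1) + 1) ≤ ((o.symm i : Fin K) : ℕ)

/-- coordinates at positions `< s m`. -/
def ltSet (𝒞 : SegColl K) (o : Equiv.Perm (Fin K)) (m : ℕ) : Finset (Fin K) :=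
  Finset.univ.filter fun i => ((o.symm i : Fin K) : ℕ) < 𝒞.s m

lemma mem_tailSet {𝒞 : SegColl K} {o : Equiv.Perm (Fin K)} {m : ℕ} {i : Fin K} :
    i ∈ tailSet 𝒞 o m ↔ (if m = 0 then 0 else 𝒞.e (m-1) + 1) ≤ ((o.symm i : Fin K) : ℕ) := by
  simp [tailSet]

lemma mem_tailSet_succ {𝒞 : SegColl K} {o : Equiv.Perm (Fin K)} {m : ℕ} {i : Fin K} :
    i ∈ tailSet 𝒞 o (m+1) ↔ 𝒞.e m + 1 ≤ ((o.symm i : Fin K) : ℕ) := by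
  simp [tailSet]

lemma mem_ltSet {𝒞 : SegColl K} {o : Equiv.Perm (Fin K)} {m : ℕ} {i : Fin K} :
    i ∈ ltSet 𝒞 o m ↔ ((o.symm i : Fin K) : ℕ) < 𝒞.s m := by
  simp [ltSet]

lemma tailSet_zero (𝒞 : SegColl K) (o : Equiv.Perm (Fin K)) : tailSet 𝒞 o 0 = univ := by
  ext i; simp [tailSet]

lemma tailSet_L (𝒞 : SegColl K) (o : Equiv.Perm (Fin K)) : tailSet 𝒞 o 𝒞.L = ∅ := by
  have h0 : 𝒞.L ≠ 0 := 𝒞.hL.ne'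
  have h2 := 𝒞.e_last
  ext i
  have h1 := (o.symm i).isLt
  simp only [tailSet, Finset.mem_filter, Finset.mem_univ, true_and, if_neg h0,
    Finset.notMem_empty, iff_false]
  omega

lemma ltSet_zero (𝒞 : SegColl K) (o : Equiv.Perm (Fin K)) : ltSet 𝒞 o 0 = ∅ := by
  have := 𝒞.s_first
  ext i
  simp [ltSet, this]

lemma SegColl.e_le (𝒞 : SegColl K) : ∀ {i j : ℕ}, i ≤ j → j < 𝒞.L → 𝒞.e i ≤ 𝒞.e j := by
  intro i j
  induction j with
  | zero => intro hij _; rw [Nat.le_zero.mp hij]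
  | succ j ih =>
    intro hij hj
    rcases Nat.lt_succ_iff_lt_or_eq.mp (Nat.lt_succ_of_le hij) with h | h
    · exact le_trans (ih (Nat.lt_succ_iff.mp h) (by omega)) (le_of_lt (𝒞.e_mono j hj))
    · rw [h]

/-- the factor `d_i(w)` of the product formula for `p*`. -/
noncomputable def dfac (q : (Fin K → Bool) → ℝ) (𝒞 : SegColl K) (o : Equiv.Perm (Fin K))
    (m : ℕ) (w : Fin K → Bool) : ℝ :=
  marg q (𝒞.seg o m) w / (if m = 0 then 1 else marg q (𝒞.ovl o (m-1)) w)

lemma ovl_subset_seg {𝒞 : SegColl K} {o : Equiv.Perm (Fin K)} {m : ℕ} (hm : m ≠ 0) :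
    𝒞.ovl o (m-1) ⊆ 𝒞.seg o m := by
  have h : m - 1 + 1 = m := Nat.succ_pred_eq_of_pos (Nat.pos_of_ne_zero hm)
  unfold SegColl.ovl
  rw [h]
  exact Finset.inter_subset_right

lemma dfac_congr {q : (Fin K → Bool) → ℝ} {𝒞 : SegColl K} {o : Equiv.Perm (Fin K)}
    {B : Finset (Fin K)} {u w : Fin K → Bool} {i : ℕ}
    (hw : w ∈ offFix B u) (hd : Disjoint (𝒞.seg o i) B) :
    dfac q 𝒞 o i w = dfac q 𝒞 o i u := by
  have hseg : ∀ (X : Finset (Fin K)), X ⊆ 𝒞.seg o i → marg q X w = marg q X u := by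
    intro X hX
    exact marg_congr fun j hj =>
      mem_offFix.mp hw j (Finset.disjoint_left.mp hd (hX hj))
  unfold dfac
  rw [hseg _ (le_refl _)]
  congr 1
  by_cases h0 : i = 0
  · simp [h0]
  · rw [if_neg h0, if_neg h0, hseg _ (ovl_subset_seg h0)]

lemma prod_dfac_eq {q : (Fin K → Bool) → ℝ} {𝒞 : SegColl K} {o : Equiv.Perm (Fin K)}
    (t : Fin K → Bool) :
    (∏ i ∈ Finset.range 𝒞.L, marg q (𝒞.seg o i) t) /
        (∏ i ∈ Finset.range (𝒞.L - 1), marg q (𝒞.ovl o i) t)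
      = ∏ i ∈ Finset.range 𝒞.L, dfac q 𝒞 o i t := by
  unfold dfac
  rw [Finset.prod_div_distrib]
  congr 1
  have hL : 𝒞.L = (𝒞.L - 1) + 1 := (Nat.succ_pred_eq_of_pos 𝒞.hL).symm
  rw [hL, Finset.prod_range_succ']
  simp

end SegAux

section Telescope
variable {K : ℕ} {𝒞 : SegColl K} {o : Equiv.Perm (Fin K)} {q : (Fin K → Bool) → ℝ}

lemma seg_disjoint_tailSet {i m : ℕ} (hi : i ≤ m) (hm : m < 𝒞.L) :
    Disjoint (𝒞.seg o i) (tailSet 𝒞 o (m+1)) := by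
  have hle : 𝒞.e i ≤ 𝒞.e m := 𝒞.e_le hi hm
  rw [Finset.disjoint_left]
  intro a ha hb
  rw [mem_seg] at ha
  rw [mem_tailSet_succ] at hb
  omega

lemma claimA (hq1 : ∑ t : Fin K → Bool, q t = 1)
    (hpos : ∀ i < 𝒞.L - 1, ∀ v : Fin K → Bool, 0 < marg q (𝒞.ovl o i) v) :
    ∀ j, ∀ v : Fin K → Bool,
      ∑ w ∈ offFix (tailSet 𝒞 o (𝒞.L - j)) v,
        ∏ i ∈ Finset.Ico (𝒞.L - j) 𝒞.L, dfac q 𝒞 o i w = 1 := by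
  intro j
  induction j with
  | zero =>
    intro v
    rw [Nat.sub_zero, tailSet_L, offFix_empty, Finset.sum_singleton, Finset.Ico_self,
      Finset.prod_empty]
  | succ j ih =>
    intro v
    by_cases hj : j < 𝒞.L
    case neg =>
      rw [show 𝒞.L - (j+1) = 𝒞.L - j by omega]
      exact ih v
    set m := 𝒞.L - (j + 1) with hm
    have hmL : m < 𝒞.L := by omega
    have hm1 : m + 1 = 𝒞.L - j := by omega
    set B1 : Finset (Fin K) := Finset.univ.filter
      (fun i => (if m = 0 then 0 else 𝒞.e (m-1) + 1) ≤ ((o.symm i : Fin K) : ℕ) ∧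
        ((o.symm i : Fin K) : ℕ) ≤ 𝒞.e m) with hB1
    have hmemB1 : ∀ i : Fin K, i ∈ B1 ↔
        ((if m = 0 then 0 else 𝒞.e (m-1) + 1) ≤ ((o.symm i : Fin K) : ℕ) ∧
          ((o.symm i : Fin K) : ℕ) ≤ 𝒞.e m) := by
      intro i; simp [hB1]
    have hem : m = 0 ∨ 𝒞.e (m-1) < 𝒞.e m := by
      rcases Nat.eq_zero_or_pos m with h | h
      · exact Or.inl h
      · refine Or.inr ?_
        have h1 := 𝒞.e_mono (m-1) (by omega)
        rwa [show m-1+1 = m by omega] at h1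
    have hdisj : Disjoint B1 (tailSet 𝒞 o (m+1)) := by
      rw [Finset.disjoint_left]
      intro a ha hb
      rw [hmemB1] at ha
      rw [mem_tailSet_succ] at hb
      omega
    have hsplit : tailSet 𝒞 o m = B1 ∪ tailSet 𝒞 o (m+1) := by
      ext i
      rw [Finset.mem_union, hmemB1, mem_tailSet, mem_tailSet_succ]
      split_ifs with h0
      · omega
      · have : 𝒞.e (m-1) < 𝒞.e m := hem.resolve_left h0
        omega
    rw [hsplit, sum_offFix_union hdisj]
    have hstep : ∀ u ∈ offFix B1 v,
        (∑ w ∈ offFix (tailSet 𝒞 o (m+1)) u, ∏ i ∈ Finset.Ico m 𝒞.L, dfac q 𝒞 o i w)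
          = dfac q 𝒞 o m u := by
      intro u hu
      have h2 : ∀ w ∈ offFix (tailSet 𝒞 o (m+1)) u,
          ∏ i ∈ Finset.Ico m 𝒞.L, dfac q 𝒞 o i w
            = dfac q 𝒞 o m u * ∏ i ∈ Finset.Ico (m+1) 𝒞.L, dfac q 𝒞 o i w := by
        intro w hw
        rw [Finset.prod_eq_prod_Ico_succ_bot hmL]
        congr 1
        exact dfac_congr hw (seg_disjoint_tailSet (le_refl m) hmL)
      rw [Finset.sum_congr rfl h2, ← Finset.mul_sum]
      have hih := ih u
      rw [← hm1] at hih
      rw [hih, mul_one]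
    rw [Finset.sum_congr rfl hstep]
    by_cases hm0 : m = 0
    · have hB1seg : B1 = 𝒞.seg o 0 := by
        have hs0 := 𝒞.s_first
        ext i
        rw [hmemB1, mem_seg, hm0]
        simp [hs0]
      have hd : ∀ u, dfac q 𝒞 o m u = marg q (𝒞.seg o 0) u := by
        intro u
        unfold dfac
        rw [hm0, if_pos rfl, div_one]
      rw [Finset.sum_congr rfl fun u _ => hd u, hB1seg]
      have h := marg_split (p := q) (A := (∅ : Finset (Fin K))) (B := 𝒞.seg o 0)
        (Finset.disjoint_left.mpr (by simp)) v
      rw [Finset.empty_union, marg_empty, hq1] at h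
      exact h.symm
    · have hd2 : Disjoint (𝒞.ovl o (m-1)) B1 := by
        rw [Finset.disjoint_left]
        intro a ha hb
        have ham : a ∈ 𝒞.seg o (m-1) := Finset.inter_subset_left ha
        rw [mem_seg] at ham
        rw [hmemB1, if_neg hm0] at hb
        omega
      have hd3 : ∀ u ∈ offFix B1 v,
          dfac q 𝒞 o m u = marg q (𝒞.seg o m) u / marg q (𝒞.ovl o (m-1)) v := by
        intro u hu
        unfold dfac
        rw [if_neg hm0]
        congr 1
        exact marg_congr fun i hi =>
          mem_offFix.mp hu i (Finset.disjoint_left.mp hd2 hi)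
      rw [Finset.sum_congr rfl hd3, ← Finset.sum_div]
      have hovl : 𝒞.ovl o (m-1) ∪ B1 = 𝒞.seg o m := by
        have h1 : m - 1 + 1 = m := Nat.succ_pred_eq_of_pos (Nat.pos_of_ne_zero hm0)
        have h2 : 𝒞.s (m-1) < 𝒞.s m := by
          have := 𝒞.s_mono (m-1) (by omega)
          rwa [show m-1+1 = m by omega] at this
        have h3 : 𝒞.e (m-1) < 𝒞.e m := hem.resolve_left hm0
        have h4 : 𝒞.s m ≤ 𝒞.e (m-1) + 1 := by
          have := 𝒞.covers (m-1) (by omega)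
          rwa [show m-1+1 = m by omega] at this
        have h5 : 𝒞.s (m-1) ≤ 𝒞.e (m-1) := 𝒞.s_le_e (m-1) (by omega)
        ext i
        rw [Finset.mem_union, hmemB1, mem_seg, mem_ovl, h1, if_neg hm0]
        omega
      have hsum : ∑ u ∈ offFix B1 v, marg q (𝒞.seg o m) u = marg q (𝒞.ovl o (m-1)) v := by
        have h := marg_split (p := q) (A := 𝒞.ovl o (m-1)) (B := B1) hd2 v
        rw [hovl] at h
        exact h.symm
      rw [hsum, div_self (ne_of_gt (hpos (m-1) (by omega) v))]

lemma claimA' (hq1 : ∑ t : Fin K → Bool, q t = 1)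
    (hpos : ∀ i < 𝒞.L - 1, ∀ v : Fin K → Bool, 0 < marg q (𝒞.ovl o i) v)
    {m : ℕ} (hm : m ≤ 𝒞.L) (v : Fin K → Bool) :
    ∑ w ∈ offFix (tailSet 𝒞 o m) v, ∏ i ∈ Finset.Ico m 𝒞.L, dfac q 𝒞 o i w = 1 := by
  have h := claimA hq1 hpos (𝒞.L - m) v
  rwa [show 𝒞.L - (𝒞.L - m) = m by omega] at h

end Telescope

section Telescope2
variable {K : ℕ} {𝒞 : SegColl K} {o : Equiv.Perm (Fin K)} {q : (Fin K → Bool) → ℝ}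

lemma claimB (hpos : ∀ i < 𝒞.L - 1, ∀ v : Fin K → Bool, 0 < marg q (𝒞.ovl o i) v) :
    ∀ m, m < 𝒞.L → ∀ v : Fin K → Bool,
      ∑ u ∈ offFix (ltSet 𝒞 o m) v, ∏ i ∈ Finset.range (m+1), dfac q 𝒞 o i u
        = marg q (𝒞.seg o m) v := by
  intro m
  induction m with
  | zero =>
    intro _ v
    rw [ltSet_zero, offFix_empty, Finset.sum_singleton, Finset.prod_range_one]
    unfold dfac
    rw [if_pos rfl, div_one]
  | succ m ih =>
    intro hm v
    have hmL : m < 𝒞.L := by omega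
    have hsd : Disjoint (𝒞.seg o (m+1)) (ltSet 𝒞 o (m+1)) := by
      rw [Finset.disjoint_left]
      intro a ha hb
      rw [mem_seg] at ha
      rw [mem_ltSet] at hb
      omega
    have h1 : ∀ u ∈ offFix (ltSet 𝒞 o (m+1)) v,
        ∏ i ∈ Finset.range (m+2), dfac q 𝒞 o i u
          = (∏ i ∈ Finset.range (m+1), dfac q 𝒞 o i u) * dfac q 𝒞 o (m+1) v := by
      intro u hu
      rw [Finset.prod_range_succ]
      congr 1
      exact dfac_congr hu hsd
    rw [Finset.sum_congr rfl h1, ← Finset.sum_mul]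
    have hsm := 𝒞.s_mono m hm
    have hcov := 𝒞.covers m hm
    have hse := 𝒞.s_le_e m hmL
    have hse' := 𝒞.s_le_e (m+1) hm
    have hem := 𝒞.e_mono m hm
    set Mid : Finset (Fin K) := Finset.univ.filter
      (fun i => 𝒞.s m ≤ ((o.symm i : Fin K) : ℕ) ∧ ((o.symm i : Fin K) : ℕ) < 𝒞.s (m+1))
      with hMid
    have hmemMid : ∀ i : Fin K, i ∈ Mid ↔
        (𝒞.s m ≤ ((o.symm i : Fin K) : ℕ) ∧ ((o.symm i : Fin K) : ℕ) < 𝒞.s (m+1)) := by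
      intro i; simp [hMid]
    have hdisj : Disjoint Mid (ltSet 𝒞 o m) := by
      rw [Finset.disjoint_left]
      intro a ha hb
      rw [hmemMid] at ha
      rw [mem_ltSet] at hb
      omega
    have hsplit : ltSet 𝒞 o (m+1) = Mid ∪ ltSet 𝒞 o m := by
      ext i
      rw [Finset.mem_union, hmemMid, mem_ltSet, mem_ltSet]
      omega
    rw [hsplit, sum_offFix_union hdisj]
    have hinner : ∀ w ∈ offFix Mid v,
        (∑ u ∈ offFix (ltSet 𝒞 o m) w, ∏ i ∈ Finset.range (m+1), dfac q 𝒞 o i u)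
          = marg q (𝒞.seg o m) w := fun w _ => ih hmL w
    rw [Finset.sum_congr rfl hinner]
    have hd2 : Disjoint (𝒞.ovl o m) Mid := by
      rw [Finset.disjoint_left]
      intro a ha hb
      rw [mem_ovl] at ha
      rw [hmemMid] at hb
      omega
    have hovl : 𝒞.ovl o m ∪ Mid = 𝒞.seg o m := by
      ext i
      rw [Finset.mem_union, mem_ovl, hmemMid, mem_seg]
      omega
    have hsum : ∑ w ∈ offFix Mid v, marg q (𝒞.seg o m) w = marg q (𝒞.ovl o m) v := by
      have h := marg_split (p := q) (A := 𝒞.ovl o m) (B := Mid) hd2 v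
      rw [hovl] at h
      exact h.symm
    rw [hsum]
    unfold dfac
    rw [if_neg (Nat.succ_ne_zero m), Nat.add_sub_cancel, mul_comm,
      div_mul_cancel₀ _ (ne_of_gt (hpos m (by omega) v))]

lemma margProd (hq1 : ∑ t : Fin K → Bool, q t = 1)
    (hpos : ∀ i < 𝒞.L - 1, ∀ v : Fin K → Bool, 0 < marg q (𝒞.ovl o i) v)
    {m : ℕ} (hm : m < 𝒞.L) (v : Fin K → Bool) :
    marg (fun t => ∏ i ∈ Finset.range 𝒞.L, dfac q 𝒞 o i t) (𝒞.seg o m) v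
      = marg q (𝒞.seg o m) v := by
  rw [marg_eq_sum_offFix]
  have hse := 𝒞.s_le_e m hm
  have hcompl : (𝒞.seg o m)ᶜ = ltSet 𝒞 o m ∪ tailSet 𝒞 o (m+1) := by
    ext i
    rw [Finset.mem_compl, Finset.mem_union, mem_seg, mem_ltSet, mem_tailSet_succ]
    omega
  have hdisj : Disjoint (ltSet 𝒞 o m) (tailSet 𝒞 o (m+1)) := by
    rw [Finset.disjoint_left]
    intro a ha hb
    rw [mem_ltSet] at ha
    rw [mem_tailSet_succ] at hb
    omega
  rw [hcompl, sum_offFix_union hdisj]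
  have hinner : ∀ u ∈ offFix (ltSet 𝒞 o m) v,
      (∑ w ∈ offFix (tailSet 𝒞 o (m+1)) u, ∏ i ∈ Finset.range 𝒞.L, dfac q 𝒞 o i w)
        = ∏ i ∈ Finset.range (m+1), dfac q 𝒞 o i u := by
    intro u _
    have hsplitprod : ∀ w : Fin K → Bool, ∏ i ∈ Finset.range 𝒞.L, dfac q 𝒞 o i w
        = (∏ i ∈ Finset.range (m+1), dfac q 𝒞 o i w)
            * ∏ i ∈ Finset.Ico (m+1) 𝒞.L, dfac q 𝒞 o i w := by
      intro w
      rw [Finset.range_eq_Ico, Finset.range_eq_Ico, Finset.prod_Ico_consecutive _ (Nat.zero_le (m+1)) hm]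
    have hcongr : ∀ w ∈ offFix (tailSet 𝒞 o (m+1)) u,
        ∏ i ∈ Finset.range 𝒞.L, dfac q 𝒞 o i w
          = (∏ i ∈ Finset.range (m+1), dfac q 𝒞 o i u)
              * ∏ i ∈ Finset.Ico (m+1) 𝒞.L, dfac q 𝒞 o i w := by
      intro w hw
      rw [hsplitprod w]
      congr 1
      refine Finset.prod_congr rfl fun i hi => ?_
      exact dfac_congr hw (seg_disjoint_tailSet (by
        rw [Finset.mem_range] at hi; omega) hm)
    rw [Finset.sum_congr rfl hcongr, ← Finset.mul_sum, claimA' hq1 hpos (by omega) u,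
      mul_one]
  rw [Finset.sum_congr rfl hinner]
  exact claimB hpos m hm v

end Telescope2

section EmpAux
variable {K : ℕ}

lemma empDist_nonneg (D : Multiset (Fin K → Bool)) (t : Fin K → Bool) :
    0 ≤ empDist D t :=
  div_nonneg (Nat.cast_nonneg _) (Nat.cast_nonneg _)

lemma empDist_sum {D : Multiset (Fin K → Bool)} (hD : D ≠ 0) :
    ∑ t : Fin K → Bool, empDist D t = 1 := by
  unfold empDist
  rw [← Finset.sum_div]
  have h1 : ∑ t : Fin K → Bool, (D.count t : ℝ) = (Multiset.card D : ℝ) := by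
    rw [← Nat.cast_sum]
    congr 1
    rw [← Multiset.toFinset_sum_count_eq D]
    refine (Finset.sum_subset (Finset.subset_univ _) ?_).symm
    intro x _ hx
    simpa [Multiset.count_eq_zero] using hx
  rw [h1, div_self]
  rw [Nat.cast_ne_zero]
  simpa [Multiset.card_eq_zero] using hD

end EmpAux

theorem pstar_is_unique_mle' {K : ℕ} (D : Multiset (Fin K → Bool)) (hD : D ≠ 0)
    (o : Equiv.Perm (Fin K)) (𝒞 : SegColl K)
    (hpos : ∀ i < 𝒞.L - 1, ∀ v : Fin K → Bool, 0 < marg (empDist D) (𝒞.ovl o i) v)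
    (pstar : (Fin K → Bool) → ℝ)
    (hpstar : ∀ t : Fin K → Bool, pstar t =
      (∏ i ∈ Finset.range 𝒞.L, marg (empDist D) (𝒞.seg o i) t) /
        ∏ i ∈ Finset.range (𝒞.L - 1), marg (empDist D) (𝒞.ovl o i) t) :
    IsDist pstar ∧
    memModel o 𝒞 pstar ∧
    (∀ i < 𝒞.L, ∀ v : Fin K → Bool,
      marg pstar (𝒞.seg o i) v = marg (empDist D) (𝒞.seg o i) v) ∧
    (∀ p : (Fin K → Bool) → ℝ, memModel o 𝒞 p →
      (∀ i < 𝒞.L, ∀ v : Fin K → Bool,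
        marg p (𝒞.seg o i) v = marg (empDist D) (𝒞.seg o i) v) →
      p = pstar) := by
  set q : (Fin K → Bool) → ℝ := empDist D with hq
  have hq0 : ∀ t, 0 ≤ q t := empDist_nonneg D
  have hq1 : ∑ t : Fin K → Bool, q t = 1 := empDist_sum hD
  have hDpos : ∀ t : Fin K → Bool,
      0 < ∏ i ∈ Finset.range (𝒞.L - 1), marg q (𝒞.ovl o i) t :=
    fun t => Finset.prod_pos fun i hi => hpos i (Finset.mem_range.mp hi) t
  have hprod : ∀ t, pstar t = ∏ i ∈ Finset.range 𝒞.L, dfac q 𝒞 o i t := by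
    intro t
    rw [hpstar t, prod_dfac_eq]
  -- IsDist
  have hIsDist : IsDist pstar := by
    constructor
    · intro t
      rw [hpstar t]
      exact div_nonneg
        (Finset.prod_nonneg fun i _ => marg_nonneg hq0 _ _) (le_of_lt (hDpos t))
    · have h := claimA' (𝒞 := 𝒞) (o := o) hq1 hpos (Nat.zero_le 𝒞.L) (fun _ => false)
      rw [tailSet_zero, offFix_univ] at h
      rw [Finset.sum_congr rfl fun t _ => hprod t]
      rw [← h]
      exact Finset.sum_congr rfl fun w _ => by
        rw [Finset.range_eq_Ico]
  -- segment marginals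
  have hSeg : ∀ m < 𝒞.L, ∀ v : Fin K → Bool,
      marg pstar (𝒞.seg o m) v = marg q (𝒞.seg o m) v := by
    intro m hm v
    rw [marg_fn_congr hprod (𝒞.seg o m) v]
    exact margProd hq1 hpos hm v
  -- overlap marginals for any p with matching segment marginals
  have hOvlGen : ∀ p : (Fin K → Bool) → ℝ,
      (∀ m < 𝒞.L, ∀ v : Fin K → Bool, marg p (𝒞.seg o m) v = marg q (𝒞.seg o m) v) →
      ∀ m < 𝒞.L - 1, ∀ v : Fin K → Bool,
        marg p (𝒞.ovl o m) v = marg q (𝒞.ovl o m) v := by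
    intro p hp m hm v
    have hsub : 𝒞.ovl o m ⊆ 𝒞.seg o m := Finset.inter_subset_left
    have hdisj : Disjoint (𝒞.ovl o m) (𝒞.seg o m \ 𝒞.ovl o m) :=
      Finset.disjoint_sdiff
    have hun : 𝒞.ovl o m ∪ (𝒞.seg o m \ 𝒞.ovl o m) = 𝒞.seg o m :=
      Finset.union_sdiff_of_subset hsub
    have h1 := marg_split (p := p) hdisj v
    have h2 := marg_split (p := q) hdisj v
    rw [hun] at h1 h2
    rw [h1, h2]
    exact Finset.sum_congr rfl fun u _ => hp m (by omega) u
  have hOvl : ∀ m < 𝒞.L - 1, ∀ v : Fin K → Bool,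
      marg pstar (𝒞.ovl o m) v = marg q (𝒞.ovl o m) v :=
    hOvlGen pstar hSeg
  -- membership in the model
  have hMem : memModel o 𝒞 pstar := by
    refine ⟨hIsDist, fun t => ?_⟩
    rw [Finset.prod_congr rfl fun i hi => hOvl i (Finset.mem_range.mp hi) t,
      Finset.prod_congr rfl fun i hi => hSeg i (Finset.mem_range.mp hi) t,
      hpstar t]
    exact div_mul_cancel₀ _ (ne_of_gt (hDpos t))
  refine ⟨hIsDist, hMem, hSeg, ?_⟩
  -- uniqueness
  intro p hp hpm
  funext t
  have h2 := hp.2 t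
  rw [Finset.prod_congr rfl fun i hi => hOvlGen p hpm i (Finset.mem_range.mp hi) t,
    Finset.prod_congr rfl fun i hi => hpm i (Finset.mem_range.mp hi) t] at h2
  rw [hpstar t, eq_div_iff (ne_of_gt (hDpos t))]
  exact h2

/-- The distribution `p*` defined from the empirical marginals of the
segments is a probability distribution, belongs to `M(𝒞)`, has the empirical marginals
on each segment, and is the unique such member of `M(𝒞)`. -/
theorem pstar_is_unique_mle {K : ℕ} (D : Multiset (Fin K → Bool)) (hD : D ≠ 0)
    (o : Equiv.Perm (Fin K)) (𝒞 : SegColl K)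
    (hpos : ∀ i < 𝒞.L - 1, ∀ v : Fin K → Bool, 0 < marg (empDist D) (𝒞.ovl o i) v)
    (pstar : (Fin K → Bool) → ℝ)
    (hpstar : ∀ t : Fin K → Bool, pstar t =
      (∏ i ∈ Finset.range 𝒞.L, marg (empDist D) (𝒞.seg o i) t) /
        ∏ i ∈ Finset.range (𝒞.L - 1), marg (empDist D) (𝒞.ovl o i) t) :
    IsDist pstar ∧
    memModel o 𝒞 pstar ∧
    (∀ i < 𝒞.L, ∀ v : Fin K → Bool,
      marg pstar (𝒞.seg o i) v = marg (empDist D) (𝒞.seg o i) v) ∧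
    (∀ p : (Fin K → Bool) → ℝ, memModel o 𝒞 p →
      (∀ i < 𝒞.L, ∀ v : Fin K → Bool,
        marg p (𝒞.seg o i) v = marg (empDist D) (𝒞.seg o i) v) →
      p = pstar) := by
  exact pstar_is_unique_mle' D hD o 𝒞 hpos pstar hpstar
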